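/- Any n×n matrix A over a field K of rank r admits a decomposition A = C·R·E where C ∈ K^{n×r} is in column echelon form, E ∈ K^{r×n} is in row echelon form, and R ∈ K^{r×r} is a permutation matrix. -/

import Mathlib

/-- `C ∈ K^{n×r}` is in column echelon form: each column is nonzero and the row indices of
the leading (first) nonzero entries of the columns are strictly increasing. -/
def IsColEchelon {K : Type*} [Field K] {n r : ℕ} (C : Matrix (Fin n) (Fin r) K) : Prop :=
  ∃ f : Fin r → Fin n, StrictMono f ∧ (∀ j, C (f j) j ≠ 0) ∧
    ∀ j, ∀ i : Fin n, (i : ℕ) < (f j : ℕ) → C i j = 0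

/-- `E ∈ K^{r×n}` is in row echelon form: each row is nonzero and the column indices of the
leading nonzero entries of the rows are strictly increasing. -/
def IsRowEchelon {K : Type*} [Field K] {n r : ℕ} (E : Matrix (Fin r) (Fin n) K) : Prop :=
  ∃ g : Fin r → Fin n, StrictMono g ∧ (∀ i, E i (g i) ≠ 0) ∧
    ∀ i, ∀ j : Fin n, (j : ℕ) < (g i : ℕ) → E i j = 0

/-- A permutation matrix: a square 0-1 matrix with exactly one 1 in each row and column. -/
def IsPermMatrix {K : Type*} [Field K] {r : ℕ} (R : Matrix (Fin r) (Fin r) K) : Prop :=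
  ∃ σ : Equiv.Perm (Fin r), ∀ i j, R i j = if σ i = j then 1 else 0

namespace CRE
open Matrix Finset
variable {K : Type*} [Field K] {n : ℕ}

/-- unit lower triangular -/
def LowT (L : Matrix (Fin n) (Fin n) K) : Prop :=
  (∀ i j : Fin n, i < j → L i j = 0) ∧ ∀ i, L i i = 1

/-- unit upper triangular -/
def UpT (U : Matrix (Fin n) (Fin n) K) : Prop :=
  (∀ i j : Fin n, j < i → U i j = 0) ∧ ∀ i, U i i = 1

/-- the first `k` columns are reduced -/
def Red (k : ℕ) (A : Matrix (Fin n) (Fin n) K) : Prop :=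
  ∀ j : Fin n, (j : ℕ) < k →
    (∀ i₁ i₂, A i₁ j ≠ 0 → A i₂ j ≠ 0 → i₁ = i₂) ∧
    (∀ i (j' : Fin n), A i j ≠ 0 → j < j' → A i j' = 0)

lemma lowT_one : LowT (1 : Matrix (Fin n) (Fin n) K) :=
  ⟨fun i j hij => by simp [Matrix.one_apply, Fin.ne_of_lt hij], fun i => by simp⟩

lemma upT_one : UpT (1 : Matrix (Fin n) (Fin n) K) :=
  ⟨fun i j hij => by simp [Matrix.one_apply, (Fin.ne_of_lt hij).symm], fun i => by simp⟩

lemma LowT.mul {L₁ L₂ : Matrix (Fin n) (Fin n) K} (h₁ : LowT L₁) (h₂ : LowT L₂) :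
    LowT (L₁ * L₂) := by
  constructor
  · intro i j hij
    rw [Matrix.mul_apply]
    refine Finset.sum_eq_zero fun t _ => ?_
    rcases lt_or_ge i t with h | h
    · rw [h₁.1 i t h, zero_mul]
    · rw [h₂.1 t j (lt_of_le_of_lt h hij), mul_zero]
  · intro i
    rw [Matrix.mul_apply]
    rw [Finset.sum_eq_single i]
    · rw [h₁.2, h₂.2, one_mul]
    · intro t _ ht
      rcases lt_or_gt_of_ne ht with h | h
      · rw [h₂.1 t i h, mul_zero]
      · rw [h₁.1 i t h, zero_mul]
    · intro h; exact absurd (Finset.mem_univ i) h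

lemma UpT.mul {U₁ U₂ : Matrix (Fin n) (Fin n) K} (h₁ : UpT U₁) (h₂ : UpT U₂) :
    UpT (U₁ * U₂) := by
  constructor
  · intro i j hij
    rw [Matrix.mul_apply]
    refine Finset.sum_eq_zero fun t _ => ?_
    rcases lt_or_ge t i with h | h
    · rw [h₁.1 i t h, zero_mul]
    · rw [h₂.1 t j (lt_of_lt_of_le hij h), mul_zero]
  · intro i
    rw [Matrix.mul_apply]
    rw [Finset.sum_eq_single i]
    · rw [h₁.2, h₂.2, one_mul]
    · intro t _ ht
      rcases lt_or_gt_of_ne ht with h | h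
      · rw [h₁.1 i t h, zero_mul]
      · rw [h₂.1 t i h, mul_zero]
    · intro h; exact absurd (Finset.mem_univ i) h

lemma step (k : ℕ) (hk : k < n) (A : Matrix (Fin n) (Fin n) K) (hA : Red k A) :
    ∃ L U B, LowT L ∧ UpT U ∧ Red (k + 1) B ∧ A = L * B * U := by
  classical
  set kk : Fin n := ⟨k, hk⟩ with hkk
  have hkv : (kk : ℕ) = k := rfl
  by_cases hz : ∀ i, A i kk = 0
  · refine ⟨1, 1, A, ⟨fun i j h => by simp [Matrix.one_apply, Fin.ne_of_lt h], fun i => by simp⟩,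
      ⟨fun i j h => by simp [Matrix.one_apply, (Fin.ne_of_lt h).symm], fun i => by simp⟩, ?_, by simp⟩
    intro j hj
    by_cases hjk : (j : ℕ) < k
    · exact hA j hjk
    · have hj' : j = kk := Fin.ext (show (j : ℕ) = k by omega)
      subst hj'
      exact ⟨fun i₁ i₂ h₁ => absurd (hz i₁) h₁, fun i j' h => absurd (hz i) h⟩
  · push_neg at hz
    set s : Finset (Fin n) := Finset.univ.filter (fun i => A i kk ≠ 0) with hs
    have hsne : s.Nonempty := by
      obtain ⟨i, hi⟩ := hz
      exact ⟨i, by simp [hs, hi]⟩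
    set p : Fin n := s.min' hsne with hpdef
    have hp : A p kk ≠ 0 := by
      have := s.min'_mem hsne
      simp [hs] at this
      exact this
    have hmin : ∀ i : Fin n, i < p → A i kk = 0 := by
      intro i hi
      by_contra h
      exact absurd (s.min'_le i (by simp [hs, h])) (not_le.mpr hi)
    have hApj : ∀ j : Fin n, (j : ℕ) < k → A p j = 0 := by
      intro j hj
      by_contra h
      exact hp ((hA j hj).2 p kk h (by rw [Fin.lt_def, hkv]; exact hj))
    set N : Matrix (Fin n) (Fin n) K :=
      Matrix.of (fun i j => if j = p ∧ p < i then A i kk / A p kk else 0) with hN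
    set M : Matrix (Fin n) (Fin n) K :=
      Matrix.of (fun i j => if i = kk ∧ kk < j then A p j / A p kk else 0) with hM
    have hNN : N * N = 0 := by
      ext i j
      rw [Matrix.mul_apply]
      refine Finset.sum_eq_zero fun t _ => ?_
      by_cases h : t = p ∧ p < i
      · have : N t j = 0 := by
          simp only [hN, Matrix.of_apply]
          rw [if_neg]
          rintro ⟨rfl, h2⟩
          exact absurd h2 (by simp [h.1])
        rw [this, mul_zero]
      · have : N i t = 0 := by simp only [hN, Matrix.of_apply]; rw [if_neg h]
        rw [this, zero_mul]
    have hMM : M * M = 0 := by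
      ext i j
      rw [Matrix.mul_apply]
      refine Finset.sum_eq_zero fun t _ => ?_
      by_cases h1 : i = kk ∧ kk < t
      · have : M t j = 0 := by
          simp only [hM, Matrix.of_apply]
          rw [if_neg]
          rintro ⟨rfl, _⟩
          exact absurd h1.2 (lt_irrefl _)
        rw [this, mul_zero]
      · have : M i t = 0 := by simp only [hM, Matrix.of_apply]; rw [if_neg h1]
        rw [this, zero_mul]
    have hNX : ∀ (X : Matrix (Fin n) (Fin n) K) (i j : Fin n),
        (N * X) i j = if p < i then A i kk / A p kk * X p j else 0 := by
      intro X i j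
      rw [Matrix.mul_apply]
      rw [Finset.sum_eq_single p]
      · by_cases h : p < i <;> simp [hN, h]
      · intro t _ ht
        have : N i t = 0 := by
          simp only [hN, Matrix.of_apply]; rw [if_neg (fun hc => ht hc.1)]
        rw [this, zero_mul]
      · intro h; exact absurd (Finset.mem_univ p) h
    have hXM : ∀ (X : Matrix (Fin n) (Fin n) K) (i j : Fin n),
        (X * M) i j = if kk < j then X i kk * (A p j / A p kk) else 0 := by
      intro X i j
      rw [Matrix.mul_apply]
      rw [Finset.sum_eq_single kk]
      · by_cases h : kk < j <;> simp [hM, h]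
      · intro t _ ht
        have : M t j = 0 := by
          simp only [hM, Matrix.of_apply]; rw [if_neg (fun hc => ht hc.1)]
        rw [this, mul_zero]
      · intro h; exact absurd (Finset.mem_univ kk) h
    set B : Matrix (Fin n) (Fin n) K := A - N * A - A * M + N * A * M with hB
    have hNAM : ∀ i j : Fin n, (N * A * M) i j =
        if p < i ∧ kk < j then A i kk / A p kk * (A p kk * (A p j / A p kk)) else 0 := by
      intro i j
      rw [mul_assoc, hNX (A * M) i j, hXM A p j]
      by_cases h : p < i <;> by_cases h2 : kk < j <;> simp [h, h2]
    have hBentry : ∀ i j : Fin n, B i j = A i j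
        - (if p < i then A i kk / A p kk * A p j else 0)
        - (if kk < j then A i kk * (A p j / A p kk) else 0)
        + (if p < i ∧ kk < j then A i kk / A p kk * (A p kk * (A p j / A p kk)) else 0) := by
      intro i j
      simp only [hB, Matrix.add_apply, Matrix.sub_apply, hNX A i j, hXM A i j, hNAM i j]
    have hB1 : ∀ (i j : Fin n), (j : ℕ) < k → B i j = A i j := by
      intro i j hj
      have h1 : A p j = 0 := hApj j hj
      have h2 : ¬ kk < j := by rw [Fin.lt_def, hkv]; omega
      rw [hBentry, h1]
      simp [h2]
    have hB4 : ∀ i : Fin n, A i kk = 0 → ∀ j, B i j = A i j := by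
      intro i hik j
      rw [hBentry, hik]
      simp
    have hB2 : ∀ i : Fin n, B i kk = if i = p then A p kk else 0 := by
      intro i
      rw [hBentry]
      rcases lt_trichotomy i p with h | h | h
      · simp [not_lt.2 h.le, hmin i h, Fin.ne_of_lt h]
      · subst h
        simp
      · simp [h, Fin.ne_of_gt h, div_mul_cancel₀ _ hp]
    have hB3 : ∀ j : Fin n, kk < j → B p j = 0 := by
      intro j hj
      rw [hBentry]
      simp [hj, mul_comm (A p kk), div_mul_cancel₀ _ hp]
    have hRed : Red (k + 1) B := by
      intro j hj
      by_cases hjk : (j : ℕ) < k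
      · constructor
        · intro i₁ i₂ h₁ h₂
          rw [hB1 _ _ hjk] at h₁ h₂
          exact (hA j hjk).1 i₁ i₂ h₁ h₂
        · intro i j' hBij hlt
          rw [hB1 _ _ hjk] at hBij
          have hik : A i kk = 0 := (hA j hjk).2 i kk hBij (by rw [Fin.lt_def, hkv]; exact hjk)
          rw [hB4 i hik]
          exact (hA j hjk).2 i j' hBij hlt
      · have hj' : j = kk := Fin.ext (show (j : ℕ) = k by omega)
        subst hj'
        constructor
        · intro i₁ i₂ h₁ h₂
          rw [hB2] at h₁ h₂
          by_cases e₁ : i₁ = p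
          · by_cases e₂ : i₂ = p
            · rw [e₁, e₂]
            · rw [if_neg e₂] at h₂; exact absurd rfl h₂
          · rw [if_neg e₁] at h₁; exact absurd rfl h₁
        · intro i j' hBij hlt
          rw [hB2] at hBij
          by_cases e : i = p
          · subst e; exact hB3 j' hlt
          · rw [if_neg e] at hBij; exact absurd rfl hBij
    have hfac : B = (1 - N) * A * (1 - M) := by
      simp only [hB]
      noncomm_ring
    have e1 : (1 + N) * (1 - N) = 1 := by
      have h : (1 + N) * (1 - N) = 1 - N * N := by noncomm_ring
      rw [h, hNN, sub_zero]
    have e2 : (1 - M) * (1 + M) = 1 := by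
      have h : (1 - M) * (1 + M) = 1 - M * M := by noncomm_ring
      rw [h, hMM, sub_zero]
    have hAB : A = (1 + N) * B * (1 + M) := by
      rw [hfac, show (1 + N) * ((1 - N) * A * (1 - M)) * (1 + M)
          = ((1 + N) * (1 - N)) * A * ((1 - M) * (1 + M)) by noncomm_ring, e1, e2, one_mul, mul_one]
    refine ⟨1 + N, 1 + M, B, ?_, ?_, hRed, hAB⟩
    · constructor
      · intro i j hij
        have hN0 : N i j = 0 := by
          simp only [hN, Matrix.of_apply]
          rw [if_neg]
          rintro ⟨rfl, h2⟩
          exact absurd (h2.trans hij) (lt_irrefl _)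
        simp [Matrix.add_apply, Matrix.one_apply, Fin.ne_of_lt hij, hN0]
      · intro i
        have hN0 : N i i = 0 := by
          simp only [hN, Matrix.of_apply]
          rw [if_neg]
          rintro ⟨rfl, h2⟩
          exact absurd h2 (lt_irrefl _)
        simp [Matrix.add_apply, Matrix.one_apply, hN0]
    · constructor
      · intro i j hij
        have hM0 : M i j = 0 := by
          simp only [hM, Matrix.of_apply]
          rw [if_neg]
          rintro ⟨rfl, h2⟩
          exact absurd (hij.trans h2) (lt_irrefl _)
        simp [Matrix.add_apply, Matrix.one_apply, (Fin.ne_of_lt hij).symm, hM0]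
      · intro i
        have hM0 : M i i = 0 := by
          simp only [hM, Matrix.of_apply]
          rw [if_neg]
          rintro ⟨rfl, h2⟩
          exact absurd h2 (lt_irrefl _)
        simp [Matrix.add_apply, Matrix.one_apply, hM0]


lemma elim : ∀ (m k : ℕ) (A : Matrix (Fin n) (Fin n) K), n ≤ k + m → Red k A →
    ∃ L U D, LowT (n := n) L ∧ UpT (n := n) U ∧ Red n D ∧ A = L * D * U := by
  intro m
  induction m with
  | zero =>
    intro k A hle hA
    exact ⟨1, 1, A, lowT_one, upT_one, fun j hj => hA j (lt_of_lt_of_le hj (by omega)), by simp⟩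
  | succ m ih =>
    intro k A hle hA
    by_cases hk : k < n
    · obtain ⟨L₁, U₁, B, hL₁, hU₁, hB, hfac⟩ := step k hk A hA
      obtain ⟨L, U, D, hL, hU, hD, hfac₂⟩ := ih (k + 1) B (by omega) hB
      exact ⟨L₁ * L, U * U₁, D, LowT.mul hL₁ hL, UpT.mul hU hU₁, hD,
        by rw [hfac, hfac₂]; noncomm_ring⟩
    · exact ⟨1, 1, A, lowT_one, upT_one, fun j hj => hA j (lt_of_lt_of_le hj (by omega)), by simp⟩

end CRE

open Matrix Finset in
/-- Any `n×n` matrix `A` over a field `K` of rank `r` admits a CRE decomposition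
`A = C·R·E` with `C` in column echelon form, `R` a permutation matrix and `E` in row
echelon form. -/
theorem exists_cre_decomposition {K : Type*} [Field K] {n : ℕ}
    (A : Matrix (Fin n) (Fin n) K) (r : ℕ) (hr : A.rank = r) :
    ∃ (C : Matrix (Fin n) (Fin r) K) (R : Matrix (Fin r) (Fin r) K)
      (E : Matrix (Fin r) (Fin n) K),
      IsColEchelon C ∧ IsPermMatrix R ∧ _root_.IsRowEchelon E ∧ A = C * R * E := by
  classical
  obtain ⟨L, U, D, hL, hU, hD, hfac⟩ :=
    CRE.elim n 0 A (by omega) (fun j hj => absurd hj (Nat.not_lt_zero _))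
  -- basic properties of the partial permutation matrix D
  have colU : ∀ (j i₁ i₂ : Fin n), D i₁ j ≠ 0 → D i₂ j ≠ 0 → i₁ = i₂ := fun j => (hD j j.isLt).1
  have rowC : ∀ (i j j' : Fin n), D i j ≠ 0 → j < j' → D i j' = 0 :=
    fun i j j' h h' => (hD j j.isLt).2 i j' h h'
  have rowU : ∀ (i j₁ j₂ : Fin n), D i j₁ ≠ 0 → D i j₂ ≠ 0 → j₁ = j₂ := by
    intro i j₁ j₂ h₁ h₂
    rcases lt_trichotomy j₁ j₂ with h | h | h
    · exact absurd (rowC i j₁ j₂ h₁ h) h₂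
    · exact h
    · exact absurd (rowC i j₂ j₁ h₂ h) h₁
  set Rows : Finset (Fin n) := Finset.univ.filter (fun i => ∃ j, D i j ≠ 0) with hRows
  set Cols : Finset (Fin n) := Finset.univ.filter (fun j => ∃ i, D i j ≠ 0) with hCols
  set c : Fin n → Fin n := fun i => if h : ∃ j, D i j ≠ 0 then h.choose else i with hcdef
  have hc : ∀ i ∈ Rows, D i (c i) ≠ 0 := by
    intro i hi
    rw [hRows, mem_filter] at hi
    simp only [hcdef, dif_pos hi.2]
    exact hi.2.choose_spec
  have hcu : ∀ (i j : Fin n), D i j ≠ 0 → c i = j := by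
    intro i j h
    have hi : i ∈ Rows := by rw [hRows, mem_filter]; exact ⟨mem_univ i, ⟨j, h⟩⟩
    exact rowU i (c i) j (hc i hi) h
  have hcC : ∀ i ∈ Rows, c i ∈ Cols := by
    intro i hi
    rw [hCols, mem_filter]
    exact ⟨mem_univ _, ⟨i, hc i hi⟩⟩
  have cinj : ∀ i₁ ∈ Rows, ∀ i₂ ∈ Rows, c i₁ = c i₂ → i₁ = i₂ := by
    intro i₁ h₁ i₂ h₂ he
    exact colU (c i₁) i₁ i₂ (hc i₁ h₁) (he ▸ hc i₂ h₂)
  have himg : Rows.image c = Cols := by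
    apply Finset.Subset.antisymm
    · intro j hj
      rw [Finset.mem_image] at hj
      obtain ⟨i, hi, rfl⟩ := hj
      exact hcC i hi
    · intro j hj
      rw [hCols, mem_filter] at hj
      obtain ⟨i, hi⟩ := hj.2
      rw [Finset.mem_image]
      exact ⟨i, by rw [hRows, mem_filter]; exact ⟨mem_univ _, ⟨j, hi⟩⟩, hcu i j hi⟩
  have hcard : Rows.card = Cols.card := by
    rw [← himg]
    exact (Finset.card_image_of_injOn (fun a ha b hb => cinj a (by simpa using ha) b (by simpa using hb))).symm
  -- the bijection between rows and columns
  have hbij : Function.Bijective (fun x : {i : Fin n // i ∈ Rows} =>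
      (⟨c x.1, hcC x.1 x.2⟩ : {j : Fin n // j ∈ Cols})) := by
    constructor
    · intro x y hxy
      exact Subtype.ext (cinj x.1 x.2 y.1 y.2 (congrArg Subtype.val hxy))
    · rintro ⟨j, hj⟩
      rw [hCols, mem_filter] at hj
      obtain ⟨i, hi⟩ := hj.2
      exact ⟨⟨i, by rw [hRows, mem_filter]; exact ⟨mem_univ _, ⟨j, hi⟩⟩⟩, Subtype.ext (hcu i j hi)⟩
  obtain ⟨eRC, heRC⟩ : ∃ e : {i : Fin n // i ∈ Rows} ≃ {j : Fin n // j ∈ Cols},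
      ∀ x, (e x : Fin n) = c x.1 := ⟨Equiv.ofBijective _ hbij, fun x => rfl⟩
  -- a bijection between the complements
  have eCompl : Nonempty ({i : Fin n // ¬ i ∈ Rows} ≃ {j : Fin n // ¬ j ∈ Cols}) := by
    apply Fintype.card_eq.mp
    rw [Fintype.card_subtype_compl, Fintype.card_subtype_compl,
      Fintype.card_coe, Fintype.card_coe, hcard]
  obtain ⟨eC⟩ := eCompl
  -- the full permutation
  obtain ⟨tau, htau⟩ : ∃ τ : Equiv.Perm (Fin n), ∀ i (hi : i ∈ Rows), τ i = c i := by
    refine ⟨((Equiv.sumCompl (· ∈ Rows)).symm.trans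
      ((eRC.sumCongr eC).trans (Equiv.sumCompl (· ∈ Cols)))), ?_⟩
    intro i hi
    simp only [Equiv.trans_apply]
    rw [Equiv.sumCompl_symm_apply_of_pos hi]
    simp [heRC ⟨i, hi⟩]
  -- D as diagonal times permutation matrix
  set d : Fin n → K := fun i => D i (tau i) with hddef
  have hDdiag : D = Matrix.diagonal d * (tau.permMatrix K) := by
    ext i j
    rw [Matrix.diagonal_mul]
    rw [Equiv.Perm.permMatrix, PEquiv.toMatrix_toPEquiv_eq, Matrix.submatrix_apply, id_eq, Matrix.one_apply]
    by_cases h : tau i = j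
    · rw [if_pos h, mul_one]
      show D i j = D i (tau i)
      rw [h]
    · rw [if_neg h, mul_zero]
      by_contra hD0
      exact h ((htau i (by rw [hRows, mem_filter]; exact ⟨mem_univ _, ⟨j, hD0⟩⟩)).trans (hcu i j hD0))
  -- rank computation
  have hdetL : L.det = 1 := by
    rw [Matrix.det_of_lowerTriangular L
      (fun i j hij => hL.1 i j (by exact hij))]
    simp [hL.2]
  have hdetU : U.det = 1 := by
    rw [Matrix.det_of_upperTriangular (fun i j hij => hU.1 i j (by exact hij))]
    simp [hU.2]
  have hdetP : IsUnit ((tau.permMatrix K).det) := by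
    rw [Matrix.det_permutation]
    rcases Int.units_eq_one_or (Equiv.Perm.sign tau) with h | h <;> rw [h]
    · simp
    · simp
  have hrankA : A.rank = Rows.card := by
    rw [hfac, Matrix.rank_mul_eq_left_of_isUnit_det U (L * D) (by rw [hdetU]; exact isUnit_one),
      Matrix.rank_mul_eq_right_of_isUnit_det L D (by rw [hdetL]; exact isUnit_one),
      hDdiag, Matrix.rank_mul_eq_left_of_isUnit_det _ _ hdetP, Matrix.rank_diagonal]
    rw [Fintype.card_subtype]
    congr 1
    ext i
    simp only [mem_filter, mem_univ, true_and]
    constructor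
    · intro h
      rw [hRows, mem_filter]
      exact ⟨mem_univ _, ⟨tau i, h⟩⟩
    · intro h
      show D i (tau i) ≠ 0
      rw [htau i h]
      exact hc i h
  have hrR : Rows.card = r := by rw [← hrankA, hr]
  have hrC : Cols.card = r := by rw [← hcard, hrR]
  -- sorted enumerations of rows and columns
  set f : Fin r ≃o {x : Fin n // x ∈ Rows} := Rows.orderIsoOfFin hrR with hfdef
  set g : Fin r ≃o {x : Fin n // x ∈ Cols} := Cols.orderIsoOfFin hrC with hgdef
  set sig : Equiv.Perm (Fin r) := (f.toEquiv.trans eRC).trans g.toEquiv.symm with hsigdef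
  have hgs : ∀ k0 : Fin r, (g (sig k0) : Fin n) = c (f k0) := by
    intro k0
    show ((g.toEquiv (sig k0) : {x : Fin n // x ∈ Cols}) : Fin n) = _
    rw [hsigdef]
    simp only [Equiv.trans_apply]
    rw [Equiv.apply_symm_apply]
    exact heRC (f.toEquiv k0)
  -- the three factors
  set Cm : Matrix (Fin n) (Fin r) K :=
    Matrix.of (fun i k0 => L i (f k0) * D (f k0) (c (f k0))) with hCm
  set Rm : Matrix (Fin r) (Fin r) K :=
    Matrix.of (fun k0 l => if sig k0 = l then (1 : K) else 0) with hRm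
  set Em : Matrix (Fin r) (Fin n) K := Matrix.of (fun k0 j => U (g k0) j) with hEm
  refine ⟨Cm, Rm, Em, ?_, ⟨sig, fun i j => rfl⟩, ?_, ?_⟩
  · -- column echelon
    refine ⟨fun k0 => (f k0 : Fin n), ?_, ?_, ?_⟩
    · intro a b hab
      exact Subtype.coe_lt_coe.mpr (f.strictMono hab)
    · intro k0
      show L (f k0) (f k0) * D (f k0) (c (f k0)) ≠ 0
      rw [hL.2, one_mul]
      exact hc _ (f k0).2
    · intro k0 i hi
      show L i (f k0) * D (f k0) (c (f k0)) = 0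
      rw [hL.1 i (f k0) hi, zero_mul]
  · -- row echelon
    refine ⟨fun k0 => (g k0 : Fin n), ?_, ?_, ?_⟩
    · intro a b hab
      exact Subtype.coe_lt_coe.mpr (g.strictMono hab)
    · intro k0
      show U (g k0) (g k0) ≠ 0
      rw [hU.2]
      exact one_ne_zero
    · intro k0 j hj
      show U (g k0) j = 0
      exact hU.1 (g k0) j hj
  · -- the product
    have hCR : ∀ (i : Fin n) (l : Fin r), (Cm * Rm) i l = Cm i (sig.symm l) := by
      intro i l
      rw [Matrix.mul_apply, Finset.sum_eq_single (sig.symm l)]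
      · show Cm i _ * (if sig (sig.symm l) = l then (1 : K) else 0) = _
        rw [Equiv.apply_symm_apply, if_pos rfl, mul_one]
      · intro t _ ht
        have hne : sig t ≠ l := fun h => ht (by rw [← h, Equiv.symm_apply_apply])
        show Cm i t * (if sig t = l then (1 : K) else 0) = 0
        rw [if_neg hne, mul_zero]
      · intro h; exact absurd (Finset.mem_univ _) h
    have hDU : ∀ (s j : Fin n), (D * U) s j =
        if s ∈ Rows then D s (c s) * U (c s) j else 0 := by
      intro s j
      by_cases hs : s ∈ Rows
      · rw [if_pos hs, Matrix.mul_apply, Finset.sum_eq_single (c s)]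
        · intro t _ ht
          have : D s t = 0 := by
            by_contra h
            exact ht (hcu s t h).symm
          rw [this, zero_mul]
        · intro h; exact absurd (Finset.mem_univ _) h
      · rw [if_neg hs, Matrix.mul_apply]
        refine Finset.sum_eq_zero fun t _ => ?_
        have : D s t = 0 := by
          by_contra h
          exact hs (by rw [hRows, mem_filter]; exact ⟨mem_univ _, ⟨t, h⟩⟩)
        rw [this, zero_mul]
    have key : L * D * U = Cm * Rm * Em := by
      rw [mul_assoc]
      ext i j
      have lhs : (L * (D * U)) i j
          = ∑ x : {s : Fin n // s ∈ Rows}, L i x * (D x (c x) * U (c x) j) := by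
        rw [Matrix.mul_apply]
        rw [Finset.sum_congr rfl (fun s _ => by rw [hDU s j, mul_ite, mul_zero])]
        rw [Finset.sum_ite_mem, Finset.univ_inter, ← Finset.sum_coe_sort]
      have rhs : (Cm * Rm * Em) i j
          = ∑ x : {s : Fin n // s ∈ Rows}, L i x * (D x (c x) * U (c x) j) := by
        rw [Matrix.mul_apply]
        rw [Finset.sum_congr rfl (fun l _ => by rw [hCR i l])]
        rw [← Equiv.sum_comp (sig.symm.trans f.toEquiv)
          (fun x : {s : Fin n // s ∈ Rows} => L i x * (D x (c x) * U (c x) j))]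
        refine Finset.sum_congr rfl (fun l _ => ?_)
        show L i (f (sig.symm l)) * D (f (sig.symm l)) (c (f (sig.symm l))) * U (g l) j = _
        have hgl : (g l : Fin n) = c (f (sig.symm l)) := by
          have h2 := hgs (sig.symm l)
          rwa [Equiv.apply_symm_apply] at h2
        rw [hgl, mul_assoc]
        rfl
      rw [lhs, rhs]
    rw [hfac, key]
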